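/- Let L̂ be a symmetric n×n matrix with λ Id ≤ L̂ ≤ Λ Id and L̂_{in} = L̂_{ni} = 0 for i < n. Let M be a symmetric n×n matrix whose top-left (n−1)×(n−1) block M' satisfies M' ≥ −K Id_{n−1} for some K ≥ 0, and suppose tr(L̂ M) ≤ 0. Then M_{nn} ≤ K (n−1) Λ / λ. In particular, semiconvexity in the tangential directions together with the supersolution property tr(L̂ D²u) ≤ 0 implies semiconcavity in the normal direction, with constant C = (n−1)Λ/λ times the semiconvexity constant. -/

import Mathlib

open Matrix

private lemma diag_nonneg' {m : Type*} [Fintype m] [DecidableEq m]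
    {A : Matrix m m ℝ} (hA : A.PosSemidef) (i : m) : 0 ≤ A i i := by
  have := hA.dotProduct_mulVec_nonneg (Pi.single i 1)
  simpa [dotProduct, mulVec, Pi.single_apply, Finset.mul_sum] using this

private lemma trace_nonneg' {m : Type*} [Fintype m] [DecidableEq m]
    {A : Matrix m m ℝ} (hA : A.PosSemidef) : 0 ≤ A.trace :=
  Finset.sum_nonneg fun i _ => diag_nonneg' hA i

private lemma trace_mul_nonneg' {m : Type*} [Fintype m] [DecidableEq m]
    {A B : Matrix m m ℝ} (hA : A.PosSemidef) (hB : B.PosSemidef) :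
    0 ≤ (A * B).trace := by
  obtain ⟨C, rfl⟩ := (by open scoped MatrixOrder in exact CStarAlgebra.nonneg_iff_eq_star_mul_self.mp hB.nonneg :
    ∃ C : Matrix m m ℝ, B = Cᴴ * C)
  have h1 : (A * (Cᴴ * C)).trace = (C * A * Cᴴ).trace := by
    rw [← Matrix.mul_assoc, Matrix.trace_mul_cycle]
  rw [h1]
  exact trace_nonneg' (hA.mul_mul_conjTranspose_same C)

private lemma submatrix_psd {n : ℕ} {A : Matrix (Fin (n+1)) (Fin (n+1)) ℝ}
    (hA : A.PosSemidef) : (A.submatrix Fin.castSucc Fin.castSucc).PosSemidef := by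
  constructor
  · have hH := hA.1
    ext i j
    simpa [Matrix.IsHermitian, Matrix.conjTranspose, Matrix.ext_iff] using
      congrFun (congrFun hH.symm j.castSucc) i.castSucc
  · intro x
    exact (hA.submatrix Fin.castSucc).2 x

/-- if `L̂` is symmetric with `λ Id ≤ L̂ ≤ Λ Id` and vanishing mixed `n`-entries,
`M` is symmetric with tangential block `M' ≥ −K Id`, and `tr(L̂ M) ≤ 0`, then
`M_{nn} ≤ K (n−1) Λ / λ` (here the dimension is `n+1`, so `n` tangential directions). -/
theorem stmt_3 (n : ℕ) (lam Lam K : ℝ) (hlam : 0 < lam) (hLam : lam ≤ Lam) (hK : 0 ≤ K)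
    (L M : Matrix (Fin (n+1)) (Fin (n+1)) ℝ) (hLsym : L.IsSymm)
    (hlow : (L - lam • (1 : Matrix (Fin (n+1)) (Fin (n+1)) ℝ)).PosSemidef)
    (hup : ((Lam • (1 : Matrix (Fin (n+1)) (Fin (n+1)) ℝ)) - L).PosSemidef)
    (hmix : ∀ i : Fin n, L i.castSucc (Fin.last n) = 0 ∧ L (Fin.last n) i.castSucc = 0)
    (hMsym : M.IsSymm)
    (hM : (M.submatrix Fin.castSucc Fin.castSucc + K • (1 : Matrix (Fin n) (Fin n) ℝ)).PosSemidef)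
    (htr : (L * M).trace ≤ 0) :
    M (Fin.last n) (Fin.last n) ≤ K * n * Lam / lam := by
  set L' := L.submatrix (Fin.castSucc (n := n)) (Fin.castSucc) with hL'
  set M' := M.submatrix (Fin.castSucc (n := n)) (Fin.castSucc) with hM'def
  have hsmul : (lam • (1 : Matrix (Fin (n+1)) (Fin (n+1)) ℝ)).PosSemidef := by
    rw [Matrix.smul_one_eq_diagonal]
    exact Matrix.PosSemidef.diagonal (fun _ => hlam.le)
  have hLpsd : L.PosSemidef := by
    have := hlow.add hsmul
    simpa using this
  have hL'psd : L'.PosSemidef := submatrix_psd hLpsd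
  -- diagonal bounds
  have hdiag_le : ∀ k : Fin (n+1), L k k ≤ Lam := by
    intro k
    have := diag_nonneg' hup k
    simp only [Matrix.sub_apply, Matrix.smul_apply, Matrix.one_apply_eq, smul_eq_mul,
      mul_one] at this
    linarith
  have hLnn : lam ≤ L (Fin.last n) (Fin.last n) := by
    have := diag_nonneg' hlow (Fin.last n)
    simp only [Matrix.sub_apply, Matrix.smul_apply, Matrix.one_apply_eq, smul_eq_mul,
      mul_one] at this
    linarith
  -- trace splitting
  have key : (L * M).trace = (L' * M').trace
      + L (Fin.last n) (Fin.last n) * M (Fin.last n) (Fin.last n) := by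
    simp only [Matrix.trace, Matrix.diag, Matrix.mul_apply, hL', hM'def,
      Matrix.submatrix_apply]
    rw [Fin.sum_univ_castSucc]
    congr 1
    · apply Finset.sum_congr rfl
      intro i _
      rw [Fin.sum_univ_castSucc, (hmix i).1, zero_mul, add_zero]
    · rw [Fin.sum_univ_castSucc]
      have hz : ∀ j : Fin n, L (Fin.last n) j.castSucc * M j.castSucc (Fin.last n) = 0 :=
        fun j => by rw [(hmix j).2, zero_mul]
      simp [hz]
  -- trace of L' is at most n * Lam
  have htrL' : L'.trace ≤ n * Lam := by
    have : L'.trace = ∑ i : Fin n, L i.castSucc i.castSucc := rfl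
    rw [this]
    calc ∑ i : Fin n, L i.castSucc i.castSucc ≤ ∑ _i : Fin n, Lam :=
          Finset.sum_le_sum fun i _ => hdiag_le _
      _ = n * Lam := by simp [mul_comm]
  have htrL'0 : 0 ≤ L'.trace := trace_nonneg' hL'psd
  -- positivity of tr(L' (M' + K 1))
  have hpos : 0 ≤ (L' * M').trace + K * L'.trace := by
    have h := trace_mul_nonneg' hL'psd hM
    have hexp : (L' * (M' + K • (1 : Matrix (Fin n) (Fin n) ℝ))).trace
        = (L' * M').trace + K * L'.trace := by
      rw [Matrix.mul_add, Matrix.trace_add]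
      congr 1
      rw [Matrix.mul_smul, Matrix.mul_one, Matrix.trace_smul, smul_eq_mul]
    rw [hexp] at h
    exact h
  -- combine
  have hKn : K * L'.trace ≤ K * (n * Lam) := mul_le_mul_of_nonneg_left htrL' hK
  have hmain : L (Fin.last n) (Fin.last n) * M (Fin.last n) (Fin.last n) ≤ K * n * Lam := by
    rw [key] at htr
    nlinarith
  rw [le_div_iff₀ hlam]
  rcases le_or_gt (M (Fin.last n) (Fin.last n)) 0 with h | h
  · nlinarith
  · nlinarith [mul_le_mul_of_nonneg_right hLnn h.le]
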